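/- Every 3×3 quantum magic square whose entries are projections is commuting: if A = (A_{ij}) with A_{ij} ∈ Mat_s(ℂ) satisfies A_{ij}² = A_{ij} = A_{ij}*, ∑_k A_{ik} = I_s and ∑_k A_{kj} = I_s for all i, j, then A_{ij} A_{kl} = A_{kl} A_{ij} for all i, j, k, l. -/
import Mathlib


open Matrix BigOperators ComplexOrder

private lemma fin3_univ : ∀ a b c : Fin 3, a ≠ b → a ≠ c → b ≠ c →
    ({a, b, c} : Finset (Fin 3)) = Finset.univ := by decide

private lemma fin3_third : ∀ a b : Fin 3, a ≠ b → a ≠ -(a+b) ∧ b ≠ -(a+b) := by decide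

private lemma fin3_sum {M : Type*} [AddCommMonoid M] (f : Fin 3 → M) (j l n : Fin 3)
    (h1 : j ≠ l) (h2 : j ≠ n) (h3 : l ≠ n) :
    ∑ c, f c = f j + f l + f n := by
  rw [← fin3_univ j l n h1 h2 h3, Finset.sum_insert (by simp [h1, h2]),
    Finset.sum_insert (by simp [h3]), Finset.sum_singleton, add_assoc]

private lemma proj_orth {s : ℕ} {p q r : Matrix (Fin s) (Fin s) ℂ}
    (hp : p*p = p) (hq : q*q = q) (hr : r*r = r) (hsum : p + q + r = 1) :
    p * q = 0 := by
  have hr2 : (1 - p - q) * (1 - p - q) = 1 - p - q := by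
    have h : r = 1 - p - q := by rw [← hsum]; abel
    rw [← h]; exact hr
  have key : p*q + q*p = 0 := by
    calc p*q + q*p
        = (1-p-q)*(1-p-q) - (1-p-q) - (p*p - p) - (q*q - q) := by noncomm_ring
      _ = 0 := by rw [hr2, hp, hq]; abel
  have hqp : q*p = -(p*q) := eq_neg_of_add_eq_zero_left (by rw [add_comm]; exact key)
  have hx2 : (p*q)*(p*q) = -(p*q) := by
    calc (p*q)*(p*q) = p*(q*p)*q := by noncomm_ring
      _ = p*(-(p*q))*q := by rw [hqp]
      _ = -((p*p)*(q*q)) := by noncomm_ring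
      _ = -(p*q) := by rw [hp, hq]
  have hx3 : (p*q)*(q*p) = -(p*q) := by
    calc (p*q)*(q*p) = p*(q*q)*p := by noncomm_ring
      _ = (p*q)*p := by rw [hq]
      _ = p*(q*p) := by noncomm_ring
      _ = p*(-(p*q)) := by rw [hqp]
      _ = -((p*p)*q) := by noncomm_ring
      _ = -(p*q) := by rw [hp]
  have hx5 : (p*q)*(q*p) = p*q := by
    rw [hqp]
    calc (p*q)*(-(p*q)) = -((p*q)*(p*q)) := by noncomm_ring
      _ = -(-(p*q)) := by rw [hx2]
      _ = p*q := by rw [neg_neg]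
  have hx4 : p*q = -(p*q) := (hx3.symm.trans hx5).symm
  have hadd : p*q + p*q = 0 := by nth_rewrite 2 [hx4]; exact add_neg_cancel _
  have h2 : (2:ℂ) • (p*q) = 0 := by rw [two_smul]; exact hadd
  rcases smul_eq_zero.mp h2 with h | h
  · norm_num at h
  · exact h

private lemma row_orth {s : ℕ} (A : Fin 3 → Fin 3 → Matrix (Fin s) (Fin s) ℂ)
    (hproj : ∀ i j, A i j * A i j = A i j) (hrow : ∀ i, ∑ k, A i k = 1)
    (i j l : Fin 3) (hjl : j ≠ l) : A i j * A i l = 0 := by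
  obtain ⟨h2, h3⟩ := fin3_third j l hjl
  have hsum : A i j + A i l + A i (-(j+l)) = 1 := by
    rw [← fin3_sum (A i) j l (-(j+l)) hjl h2 h3]; exact hrow i
  exact proj_orth (hproj i j) (hproj i l) (hproj i (-(j+l))) hsum

private lemma col_orth {s : ℕ} (A : Fin 3 → Fin 3 → Matrix (Fin s) (Fin s) ℂ)
    (hproj : ∀ i j, A i j * A i j = A i j) (hcol : ∀ j, ∑ k, A k j = 1)
    (i k j : Fin 3) (hik : i ≠ k) : A i j * A k j = 0 := by
  obtain ⟨h2, h3⟩ := fin3_third i k hik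
  have hsum : A i j + A k j + A (-(i+k)) j = 1 := by
    rw [← fin3_sum (fun c => A c j) i k (-(i+k)) hik h2 h3]; exact hcol j
  exact proj_orth (hproj i j) (hproj k j) (hproj (-(i+k)) j) hsum

private lemma swap_lemma {s : ℕ} (A : Fin 3 → Fin 3 → Matrix (Fin s) (Fin s) ℂ)
    (hproj : ∀ i j, A i j * A i j = A i j)
    (hrow : ∀ i, ∑ k, A i k = 1) (hcol : ∀ j, ∑ k, A k j = 1)
    (i j k l m n : Fin 3)
    (hik : i ≠ k) (him : i ≠ m) (hkm : k ≠ m)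
    (hjl : j ≠ l) (hjn : j ≠ n) (hln : l ≠ n) :
    A i j * A k l = A i j * A m n := by
  have hcoln : A i n + A k n + A m n = 1 := by
    rw [← fin3_sum (fun c => A c n) i k m hik him hkm]; exact hcol n
  have hAmn : A m n = 1 - A i n - A k n := by rw [← hcoln]; abel
  have hrk : A k j + A k l + A k n = 1 := by
    rw [← fin3_sum (A k) j l n hjl hjn hln]; exact hrow k
  have hAkn : A k n = 1 - A k j - A k l := by rw [← hrk]; abel
  have h1 : A i j * A i n = 0 := row_orth A hproj hrow i j n hjn
  have h2 : A i j * A k j = 0 := col_orth A hproj hcol i k j hik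
  rw [hAmn, hAkn,
    show (1:Matrix (Fin s) (Fin s) ℂ) - A i n - (1 - A k j - A k l) = A k j + A k l - A i n
      from by abel,
    mul_sub, mul_add, h1, h2]
  abel

/-- every 3×3 quantum permutation matrix is commuting: if the blocks are
projections with rows and columns summing to the identity, then all blocks pairwise
commute. -/
theorem three_by_three_qpm_commuting (s : ℕ)
    (A : Fin 3 → Fin 3 → Matrix (Fin s) (Fin s) ℂ)
    (hproj : ∀ i j, A i j * A i j = A i j)
    (hherm : ∀ i j, (A i j)ᴴ = A i j)
    (hrow : ∀ i, ∑ k, A i k = 1)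
    (hcol : ∀ j, ∑ k, A k j = 1) :
    ∀ i j k l, A i j * A k l = A k l * A i j := by
  intro i j k l
  by_cases hik : i = k
  · by_cases hjl : j = l
    · subst hik; subst hjl; rfl
    · subst hik
      rw [row_orth A hproj hrow i j l hjl, row_orth A hproj hrow i l j (Ne.symm hjl)]
  · by_cases hjl : j = l
    · subst hjl
      rw [col_orth A hproj hcol i k j hik, col_orth A hproj hcol k i j (Ne.symm hik)]
    · set m := -(i+k) with hm
      set n := -(j+l) with hn
      obtain ⟨him, hkm⟩ := fin3_third i k hik
      obtain ⟨hjn, hln⟩ := fin3_third j l hjl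
      have h1 : A i j * A k l = A i j * A m n :=
        swap_lemma A hproj hrow hcol i j k l m n hik him hkm hjl hjn hln
      have h2 : A k l * A i j = A k l * A m n :=
        swap_lemma A hproj hrow hcol k l i j m n (Ne.symm hik) hkm him
          (Ne.symm hjl) hln hjn
      have h3 : A m n * A i j = A m n * A k l :=
        swap_lemma A hproj hrow hcol m n i j k l (Ne.symm him) (Ne.symm hkm) hik
          (Ne.symm hjn) (Ne.symm hln) hjl
      have h4 : A i j * A m n = A k l * A m n := by
        have := congrArg conjTranspose h3
        simpa [Matrix.conjTranspose_mul, hherm] using this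
      calc A i j * A k l = A i j * A m n := h1
        _ = A k l * A m n := h4
        _ = A k l * A i j := h2.symm
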